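/- Let R be an Artinian commutative ring and R ⊆ S an unramified ring extension of finite type. Then for every prime ideal P of R, PS is the intersection of the (finitely many) prime ideals of S lying over P; in particular PS is a radical ideal. -/

import Mathlib

universe u v

/-- Unramified essentially-finite-type algebra over a field is reduced
(universe-polymorphic version of `Algebra.FormallyUnramified.isReduced_of_field`). -/
theorem aux_isReduced_of_field (K : Type u) (A : Type v) [Field K] [CommRing A] [Algebra K A]
    [Algebra.FormallyUnramified K A] [Algebra.EssFiniteType K A] : IsReduced A := by
  letI : Algebra (ULift.{max u v} K) K := (ULift.ringEquiv (R := K)).toRingHom.toAlgebra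
  haveI : Algebra.FormallyUnramified (ULift.{max u v} K) K :=
    ⟨KaehlerDifferential.subsingleton_of_surjective _ _ (ULift.ringEquiv (R := K)).surjective⟩
  haveI : Algebra.FiniteType (ULift.{max u v} K) K :=
    Algebra.FiniteType.of_surjective (Algebra.ofId _ K)
      (ULift.ringEquiv (R := K)).surjective
  letI : Algebra (ULift.{max u v} K) A :=
    ((algebraMap K A).comp (algebraMap (ULift.{max u v} K) K)).toAlgebra
  haveI := IsScalarTower.of_algebraMap_eq (R := ULift.{max u v} K) (S := K) (A := A)
    (fun _ => rfl)
  haveI : Algebra.FormallyUnramified (ULift.{max u v} K) A :=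
    Algebra.FormallyUnramified.comp (ULift.{max u v} K) K A
  haveI : Algebra.EssFiniteType (ULift.{max u v} K) A :=
    Algebra.EssFiniteType.comp (ULift.{max u v} K) K A
  letI : Algebra A (ULift.{max u v} A) := (ULift.ringEquiv (R := A)).symm.toRingHom.toAlgebra
  haveI : Algebra.FormallyUnramified A (ULift.{max u v} A) :=
    ⟨KaehlerDifferential.subsingleton_of_surjective _ _
      (ULift.ringEquiv (R := A)).symm.surjective⟩
  haveI : Algebra.FiniteType A (ULift.{max u v} A) :=
    Algebra.FiniteType.of_surjective (Algebra.ofId _ _)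
      (ULift.ringEquiv (R := A)).symm.surjective
  letI : Algebra (ULift.{max u v} K) (ULift.{max u v} A) :=
    ((algebraMap A (ULift.{max u v} A)).comp (algebraMap (ULift.{max u v} K) A)).toAlgebra
  haveI := IsScalarTower.of_algebraMap_eq (R := ULift.{max u v} K) (S := A)
    (A := ULift.{max u v} A) (fun _ => rfl)
  haveI : Algebra.FormallyUnramified (ULift.{max u v} K) (ULift.{max u v} A) :=
    Algebra.FormallyUnramified.comp (ULift.{max u v} K) A (ULift.{max u v} A)
  haveI : Algebra.EssFiniteType (ULift.{max u v} K) (ULift.{max u v} A) :=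
    Algebra.EssFiniteType.comp (ULift.{max u v} K) A (ULift.{max u v} A)
  haveI : IsReduced (ULift.{max u v} A) :=
    Algebra.FormallyUnramified.isReduced_of_field (ULift.{max u v} K) (ULift.{max u v} A)
  exact isReduced_of_injective ((ULift.ringEquiv (R := A)).symm.toRingHom : A →+* ULift.{max u v} A)
    (ULift.ringEquiv (R := A)).symm.injective

/-- If `R` is Artinian and `R ⊆ S` is unramified, then for each prime `P` of `R`,
`PS` is the intersection of the finitely many primes of `S` over `P`; in particular
it is a radical ideal. -/
theorem unramified_artinian_radical_fiber
    (R S : Type*) [CommRing R] [CommRing S] [Algebra R S] [IsArtinianRing R]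
    (hinj : Function.Injective (algebraMap R S))
    (hft : Algebra.FiniteType R S) (hunr : Subsingleton (Ω[S⁄R]))
    (P : Ideal R) (hP : P.IsPrime) :
    {Q : Ideal S | Q.IsPrime ∧ Q.comap (algebraMap R S) = P}.Finite ∧
    P.map (algebraMap R S) = sInf {Q : Ideal S | Q.IsPrime ∧ Q.comap (algebraMap R S) = P} ∧
    (P.map (algebraMap R S)).IsRadical := by
  haveI := hP
  haveI hPmax : P.IsMaximal := IsArtinianRing.isMaximal_of_isPrime P
  letI : Field (R ⧸ P) := Ideal.Quotient.field P
  set f := algebraMap R S with hf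
  set J := P.map f with hJ
  -- the fiber ring S ⧸ PS over the field R ⧸ P
  haveI : Algebra.FormallyUnramified R S := ⟨hunr⟩
  haveI : Algebra.FormallyUnramified R (S ⧸ J) :=
    Algebra.FormallyUnramified.comp R S (S ⧸ J)
  haveI : Algebra.FormallyUnramified (R ⧸ P) (S ⧸ J) :=
    Algebra.FormallyUnramified.of_restrictScalars R (R ⧸ P) (S ⧸ J)
  haveI : Algebra.FiniteType R (S ⧸ J) :=
    Algebra.FiniteType.of_surjective (Ideal.Quotient.mkₐ R J) Ideal.Quotient.mk_surjective
  haveI : Algebra.FiniteType (R ⧸ P) (S ⧸ J) :=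
    Algebra.FiniteType.of_restrictScalars_finiteType R (R ⧸ P) (S ⧸ J)
  haveI : Module.Finite (R ⧸ P) (S ⧸ J) :=
    Algebra.FormallyUnramified.finite_of_free (R ⧸ P) (S ⧸ J)
  haveI : IsArtinianRing (S ⧸ J) := IsArtinianRing.of_finite (R ⧸ P) (S ⧸ J)
  haveI : IsReduced (S ⧸ J) := aux_isReduced_of_field (R ⧸ P) (S ⧸ J)
  have hrad : J.IsRadical := (Ideal.isRadical_iff_quotient_reduced J).mpr ‹_›
  -- primes over P are exactly primes containing J
  have hset : {Q : Ideal S | Q.IsPrime ∧ Q.comap f = P} = {Q : Ideal S | J ≤ Q ∧ Q.IsPrime} := by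
    ext Q
    constructor
    · rintro ⟨hQ, hc⟩
      exact ⟨Ideal.map_le_iff_le_comap.mpr hc.ge, hQ⟩
    · rintro ⟨hle, hQ⟩
      refine ⟨hQ, ?_⟩
      haveI := hQ
      haveI : (Q.comap f).IsPrime := Ideal.IsPrime.comap f
      exact (hPmax.eq_of_le (Ideal.IsPrime.ne_top ‹_›)
        (Ideal.map_le_iff_le_comap.mp hle)).symm
    -- finiteness
  have hfin : {Q : Ideal S | Q.IsPrime ∧ Q.comap f = P}.Finite := by
    apply ((IsArtinianRing.setOfPred_isPrime_finite (S ⧸ J)).image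
      (Ideal.comap (Ideal.Quotient.mk J))).subset
    rintro Q ⟨hQ, hc⟩
    have hle : J ≤ Q := Ideal.map_le_iff_le_comap.mpr hc.ge
    refine ⟨Q.map (Ideal.Quotient.mk J), ?_, ?_⟩
    · exact Ideal.map_isPrime_of_surjective Ideal.Quotient.mk_surjective
        (by rwa [Ideal.mk_ker])
    · rw [Ideal.comap_map_of_surjective _ Ideal.Quotient.mk_surjective,
        ← RingHom.ker_eq_comap_bot, Ideal.mk_ker, sup_eq_left.mpr hle]
  refine ⟨hfin, ?_, hrad⟩
  rw [hset]
  rw [show sInf {Q : Ideal S | J ≤ Q ∧ Q.IsPrime} = J.radical from (Ideal.radical_eq_sInf J).symm,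
    hrad.radical]
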